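/- The coefficient operators of the normalized partial sums satisfy the Rackauskas–Suquet conditions: fix s₁,…,s_p ∈ S with h(s_i) ∈ (1/2,1) for each i, and set A_{nj} = diag(n^{d(s₁)−3/2} a_{nj}(s₁), …, n^{d(s_p)−3/2} a_{nj}(s_p)), so that ‖A_{nj}‖_op = max_{1≤i≤p} |n^{d(s_i)−3/2} a_{nj}(s_i)|. Then lim_{n→∞} sup_{j∈ℤ} ‖A_{nj}‖_op = 0 and limsup_{n→∞} ∑_{j∈ℤ} ‖A_{nj}‖_op² < ∞. -/

import Mathlib

open Filter Finset

lemma rs_step_up {h : ℝ} (h0 : 0 < h) (h1 : h < 1) {y : ℝ} (hy : 1 ≤ y) :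
    (y - 1) ^ (1 - h) ≤ y ^ (1 - h) - (1 - h) * y ^ (-h) := by
  have hy0 : (0 : ℝ) < y := lt_of_lt_of_le one_pos hy
  have hs : (-1 : ℝ) ≤ -(1 / y) := by
    have : 1 / y ≤ 1 := div_le_one_of_le₀ hy hy0.le
    linarith
  have hb := rpow_one_add_le_one_add_mul_self hs (by linarith : (0:ℝ) ≤ 1 - h)
    (by linarith : (1:ℝ) - h ≤ 1)
  have e1 : 1 + -(1 / y) = (y - 1) / y := by field_simp; ring
  rw [e1, Real.div_rpow (by linarith) hy0.le] at hb
  have hyp : 0 < y ^ (1 - h) := Real.rpow_pos_of_pos hy0 _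
  have h2 := (div_le_iff₀ hyp).mp hb
  have e3 : y ^ (-h) = y ^ (1 - h) / y := by
    rw [show -h = (1 - h) - 1 by ring, Real.rpow_sub_one hy0.ne']
  have e2 : (1 + (1 - h) * -(1 / y)) * y ^ (1 - h)
      = y ^ (1 - h) - (1 - h) * y ^ (-h) := by
    rw [e3]; field_simp; ring
  linarith [e2 ▸ h2]

lemma rs_sum_range {h : ℝ} (h0 : 0 < h) (h1 : h < 1) (m : ℕ) :
    ∑ l ∈ Finset.range m, ((l : ℝ) + 1) ^ (-h) ≤ (m : ℝ) ^ (1 - h) / (1 - h) := by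
  have h1h : (0:ℝ) < 1 - h := by linarith
  induction m with
  | zero => simp [Real.zero_rpow (by linarith : (1:ℝ) - h ≠ 0)]
  | succ m ih =>
    rw [Finset.sum_range_succ]
    have key := rs_step_up h0 h1 (y := (m : ℝ) + 1)
      (by linarith [Nat.cast_nonneg (α := ℝ) m])
    have e : ((m : ℝ) + 1) - 1 = (m : ℝ) := by ring
    rw [e] at key
    push_cast
    rw [le_div_iff₀ h1h, add_mul]
    have h4 : (∑ x ∈ Finset.range m, ((x:ℝ) + 1) ^ (-h)) * (1 - h) ≤ (m:ℝ) ^ (1-h) := by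
      have := mul_le_mul_of_nonneg_right ih h1h.le
      rwa [div_mul_cancel₀ _ h1h.ne'] at this
    nlinarith [key, h4]


lemma rs_step_down {q : ℝ} (hq : 1 < q) {u : ℝ} (hu : 1 ≤ u) :
    (q - 1) * (u + 1) ^ (-q) ≤ u ^ (1 - q) - (u + 1) ^ (1 - q) := by
  have hu0 : (0:ℝ) < u := lt_of_lt_of_le one_pos hu
  have hu1 : (0:ℝ) < u + 1 := by linarith
  have hs : (-1:ℝ) ≤ 1 / u := by
    have : (0:ℝ) < 1 / u := by positivity
    linarith
  have hb := one_add_mul_self_le_rpow_one_add hs hq.le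
  have e1 : 1 + 1 / u = (u + 1) / u := by field_simp
  rw [e1, Real.div_rpow (by linarith) hu0.le] at hb
  have huq : (0:ℝ) < u ^ q := Real.rpow_pos_of_pos hu0 _
  have h2' := (le_div_iff₀ huq).mp hb
  have e3 : u ^ (q - 1) = u ^ q / u := Real.rpow_sub_one hu0.ne' q
  have key : (u + q) * u ^ (q - 1) ≤ (u + 1) ^ q := by
    have e2 : (1 + q * (1 / u)) * u ^ q = (u + q) * u ^ (q - 1) := by
      rw [e3]; field_simp
    linarith [e2 ▸ h2']
  have hq1 : (0:ℝ) < u ^ (q - 1) := Real.rpow_pos_of_pos hu0 _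
  have h1q : (0:ℝ) < (u + 1) ^ q := Real.rpow_pos_of_pos hu1 _
  have final : (u + q) * ((u + 1) ^ q)⁻¹ ≤ (u ^ (q - 1))⁻¹ := by
    rw [← div_eq_mul_inv, ← one_div, div_le_div_iff₀ h1q hq1]
    linarith [key]
  have e4 : u ^ (1 - q) = (u ^ (q - 1))⁻¹ := by
    rw [show (1:ℝ) - q = -(q - 1) by ring, Real.rpow_neg hu0.le]
  have e5 : (u + 1) ^ (-q) = ((u + 1) ^ q)⁻¹ := Real.rpow_neg hu1.le q
  have e6 : (u + 1) ^ (1 - q) = (u + 1) * (u + 1) ^ (-q) := by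
    rw [show (1:ℝ) - q = 1 + -q by ring, Real.rpow_add hu1, Real.rpow_one]
  rw [e4, e6, e5]
  nlinarith [final]

lemma rs_tail_sum {q : ℝ} (hq : 1 < q) {c : ℝ} (hc : 1 ≤ c) (N : ℕ) :
    ∑ t ∈ Finset.range N, (c + 1 + (t : ℝ)) ^ (-q) ≤ c ^ (1 - q) / (q - 1) := by
  have hq1 : (0:ℝ) < q - 1 := by linarith
  have main : ∀ N : ℕ, ∑ t ∈ Finset.range N, (c + 1 + (t : ℝ)) ^ (-q)
      ≤ (c ^ (1 - q) - (c + (N : ℝ)) ^ (1 - q)) / (q - 1) := by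
    intro N
    induction N with
    | zero => simp
    | succ N ih =>
      rw [Finset.sum_range_succ]
      have key := rs_step_down hq (u := c + (N : ℝ))
        (by linarith [Nat.cast_nonneg (α := ℝ) N])
      push_cast
      rw [show c + 1 + (N:ℝ) = c + (N:ℝ) + 1 from by ring,
        show c + ((N:ℝ) + 1) = c + (N:ℝ) + 1 from by ring]
      rw [le_div_iff₀ hq1, add_mul]
      have h4 : (∑ t ∈ Finset.range N, (c + 1 + (t : ℝ)) ^ (-q)) * (q - 1)
          ≤ c ^ (1 - q) - (c + (N : ℝ)) ^ (1 - q) := by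
        have := mul_le_mul_of_nonneg_right ih hq1.le
        rwa [div_mul_cancel₀ _ hq1.ne'] at this
      nlinarith [key, h4]
  refine (main N).trans ?_
  have hN : (0:ℝ) ≤ (c + (N : ℝ)) ^ (1 - q) :=
    Real.rpow_nonneg (by linarith [Nat.cast_nonneg (α := ℝ) N]) _
  gcongr
  linarith


noncomputable def rsF (h : ℝ) (m : ℤ) : ℝ :=
  if 0 ≤ m then ((m : ℝ) + 1) ^ (-h) else 0

lemma rsF_nonneg (h : ℝ) (m : ℤ) : 0 ≤ rsF h m := by
  unfold rsF; split
  · positivity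
  · exact le_refl 0

lemma rs_Icc_eq (G : ℤ → ℝ) (n : ℕ) :
    ∑ k ∈ Finset.Icc (1:ℤ) (n:ℤ), G k = ∑ k ∈ Finset.range n, G ((k:ℤ)+1) := by
  have : Finset.Icc (1:ℤ) (n:ℤ)
      = Finset.map ⟨fun k : ℕ => (k:ℤ)+1, fun a b hab => by simpa using hab⟩
        (Finset.range n) := by
    ext z
    simp only [Finset.mem_Icc, Finset.mem_map, Finset.mem_range,
      Function.Embedding.coeFn_mk]
    constructor
    · rintro ⟨h1, h2⟩
      exact ⟨(z - 1).toNat, by omega, by show ((z - 1).toNat : ℤ) + 1 = z; omega⟩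
    · rintro ⟨k, hk, rfl⟩
      show 1 ≤ (k:ℤ) + 1 ∧ (k:ℤ) + 1 ≤ n
      omega
  rw [this, Finset.sum_map]
  rfl

lemma rs_sum_F_le {h : ℝ} (h0 : 0 < h) (h1 : h < 1) (n : ℕ) (j : ℤ) (hj : j ≤ (n:ℤ)) :
    ∑ k ∈ Finset.range n, rsF h ((k:ℤ) + 1 - j) ≤ ((n:ℝ) - (j:ℝ) + 1) ^ (1-h) / (1-h) := by
  classical
  set m : ℕ := ((n:ℤ) - j).toNat + 1 with hm
  set P : ℕ → Prop := fun k => j ≤ (k:ℤ) + 1 with hP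
  have step1 : ∑ k ∈ Finset.range n, rsF h ((k:ℤ) + 1 - j)
      = ∑ k ∈ (Finset.range n).filter P, rsF h ((k:ℤ) + 1 - j) := by
    refine (Finset.sum_filter_of_ne ?_).symm
    intro k _ hne
    by_contra hc
    replace hc : ¬ (j ≤ (k:ℤ) + 1) := hc
    exact hne (by unfold rsF; rw [if_neg (by omega)])
  have hinj : ∀ x ∈ (Finset.range n).filter P, ∀ y ∈ (Finset.range n).filter P,
      ((x:ℤ) + 1 - j).toNat = ((y:ℤ) + 1 - j).toNat → x = y := by
    intro x hx y hy hxy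
    simp only [Finset.mem_filter, Finset.mem_range, hP] at hx hy
    omega
  have step2 : ∑ k ∈ (Finset.range n).filter P, rsF h ((k:ℤ) + 1 - j)
      = ∑ l ∈ ((Finset.range n).filter P).image
          (fun k : ℕ => (((k:ℤ) + 1 - j).toNat : ℕ)), ((l:ℝ) + 1) ^ (-h) := by
    rw [Finset.sum_image hinj]
    apply Finset.sum_congr rfl
    intro k hk
    simp only [Finset.mem_filter, Finset.mem_range, hP] at hk
    unfold rsF
    rw [if_pos (by omega)]
    have hnn : (0:ℤ) ≤ (k:ℤ) + 1 - j := by omega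
    have hkj : ((((k:ℤ) + 1 - j).toNat : ℕ) : ℝ) = (((k:ℤ) + 1 - j : ℤ) : ℝ) := by
      exact_mod_cast congrArg (fun z : ℤ => (z:ℝ)) (Int.toNat_of_nonneg hnn)
    rw [hkj]
  have step3 : ∑ l ∈ ((Finset.range n).filter P).image
          (fun k : ℕ => (((k:ℤ) + 1 - j).toNat : ℕ)), ((l:ℝ) + 1) ^ (-h)
      ≤ ∑ l ∈ Finset.range m, ((l:ℝ) + 1) ^ (-h) := by
    apply Finset.sum_le_sum_of_subset_of_nonneg
    · intro l hl
      simp only [Finset.mem_image, Finset.mem_filter, Finset.mem_range, hP] at hl ⊢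
      obtain ⟨k, ⟨hk, hjk⟩, rfl⟩ := hl
      rw [hm]
      omega
    · intro l _ _
      positivity
  have step4 := rs_sum_range h0 h1 m
  have hmr : (m:ℝ) = (n:ℝ) - (j:ℝ) + 1 := by
    have h5 : (((((n:ℤ) - j).toNat : ℕ)) : ℝ) = (((n:ℤ) - j : ℤ) : ℝ) := by
      exact_mod_cast congrArg (fun z : ℤ => (z:ℝ))
        (Int.toNat_of_nonneg (by omega : (0:ℤ) ≤ (n:ℤ) - j))
    rw [hm]
    push_cast [h5]
    ring
  rw [step1, step2, ← hmr]
  exact step3.trans step4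

lemma rs_sum_F_tail {h : ℝ} (h0 : 0 < h) (n : ℕ) (j : ℤ) (hj : j ≤ 0) :
    ∑ k ∈ Finset.range n, rsF h ((k:ℤ) + 1 - j) ≤ (n:ℝ) * ((1:ℝ) - (j:ℝ)) ^ (-h) := by
  have hjr : (0:ℝ) < 1 - (j:ℝ) := by
    have : (j:ℝ) ≤ 0 := by exact_mod_cast hj
    linarith
  have hb : ∀ k ∈ Finset.range n, rsF h ((k:ℤ) + 1 - j) ≤ ((1:ℝ) - (j:ℝ)) ^ (-h) := by
    intro k _
    unfold rsF
    rw [if_pos (by omega)]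
    apply Real.rpow_le_rpow_of_nonpos hjr _ (by linarith)
    push_cast
    have : (0:ℝ) ≤ (k:ℝ) := Nat.cast_nonneg k
    linarith
  calc ∑ k ∈ Finset.range n, rsF h ((k:ℤ) + 1 - j)
      ≤ ∑ _k ∈ Finset.range n, ((1:ℝ) - (j:ℝ)) ^ (-h) := Finset.sum_le_sum hb
    _ = (n:ℝ) * ((1:ℝ) - (j:ℝ)) ^ (-h) := by
        rw [Finset.sum_const, Finset.card_range, nsmul_eq_mul]
/-- **The coefficient operators of the normalized partial sums satisfy the
Rackauskas–Suquet conditions.**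
Fix `s₁, …, s_p ∈ S` with `h(sᵢ) = Re d(sᵢ) ∈ (1/2, 1)` for each `i`, and set
`A_{nj} = diag(n^{d(s₁)−3/2} a_{nj}(s₁), …, n^{d(s_p)−3/2} a_{nj}(s_p))`, whose operator norm is
`‖A_{nj}‖ = max_{1≤i≤p} |n^{d(sᵢ)−3/2} a_{nj}(sᵢ)|`, where `a_{nj}(s) = ∑_{k=1}^n v_{k−j}(s)`
and `v_j(s) = (j+1)^{−d(s)}` for `j ≥ 0`, `v_j(s) = 0` for `j < 0`.
Then `lim_n sup_j ‖A_{nj}‖ = 0` and `limsup_n ∑_j ‖A_{nj}‖² < ∞`. -/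
theorem coefficient_operators_rackauskas_suquet {S : Type*} (d : S → ℂ)
    (p : ℕ) (hp : 0 < p) (s : Fin p → S)
    (hh : ∀ i, 1 / 2 < (d (s i)).re ∧ (d (s i)).re < 1)
    (v : S → ℤ → ℂ)
    (hv : ∀ x (j : ℤ), v x j = if 0 ≤ j then ((j : ℂ) + 1) ^ (-(d x)) else 0)
    (a : ℕ → ℤ → S → ℂ)
    (ha : ∀ (n : ℕ) (j : ℤ) (x : S), a n j x = ∑ k ∈ Finset.Icc (1 : ℤ) (n : ℤ), v x (k - j))
    (Anorm : ℕ → ℤ → ℝ)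
    (hAnorm : ∀ (n : ℕ) (j : ℤ),
      Anorm n j = ⨆ i : Fin p, ‖(n : ℂ) ^ (d (s i) - 3 / 2) * a n j (s i)‖) :
    Tendsto (fun n : ℕ => ⨆ j : ℤ, ENNReal.ofReal (Anorm n j)) atTop (nhds 0)
      ∧ Filter.limsup (fun n : ℕ => ∑' j : ℤ, ENNReal.ofReal ((Anorm n j) ^ 2)) atTop < ⊤ := by
  have hne : Nonempty (Fin p) := Fin.pos_iff_nonempty.mp hp
  set H : Fin p → ℝ := fun i => (d (s i)).re with hH
  have hH12 : ∀ i, 1/2 < H i := fun i => (hh i).1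
  have hH1 : ∀ i, H i < 1 := fun i => (hh i).2
  have hH0 : ∀ i, 0 < H i := fun i => lt_trans (by norm_num) (hH12 i)
  -- norm of v
  have hvnorm : ∀ i (mm : ℤ), ‖v (s i) mm‖ = rsF (H i) mm := by
    intro i mm
    rw [hv]
    unfold rsF
    by_cases hmm : 0 ≤ mm
    · rw [if_pos hmm, if_pos hmm]
      have hpos : (0:ℝ) < (mm:ℝ) + 1 := by
        have : (0:ℝ) ≤ (mm:ℝ) := by exact_mod_cast hmm
        linarith
      have hcast : ((mm:ℂ) + 1) = ((((mm:ℝ) + 1) : ℝ) : ℂ) := by push_cast; ring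
      rw [hcast, Complex.norm_cpow_eq_rpow_re_of_pos hpos]
      rw [Complex.neg_re]
    · rw [if_neg hmm, if_neg hmm, norm_zero]
  -- bound on ‖a‖
  have hanorm : ∀ i (n : ℕ) (j : ℤ),
      ‖a n j (s i)‖ ≤ ∑ k ∈ Finset.range n, rsF (H i) ((k:ℤ) + 1 - j) := by
    intro i n j
    rw [ha]
    refine (norm_sum_le _ _).trans (le_of_eq ?_)
    calc ∑ k ∈ Finset.Icc (1:ℤ) (n:ℤ), ‖v (s i) (k - j)‖
        = ∑ k ∈ Finset.Icc (1:ℤ) (n:ℤ), rsF (H i) (k - j) :=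
          Finset.sum_congr rfl (fun k _ => hvnorm i (k - j))
      _ = ∑ k ∈ Finset.range n, rsF (H i) ((k:ℤ) + 1 - j) :=
          rs_Icc_eq (fun k => rsF (H i) (k - j)) n
  -- a vanishes for j > n
  have hazero : ∀ i (n : ℕ) (j : ℤ), (n:ℤ) < j → a n j (s i) = 0 := by
    intro i n j hj
    rw [ha]
    apply Finset.sum_eq_zero
    intro k hk
    simp only [Finset.mem_Icc] at hk
    rw [hv, if_neg (by omega)]
  -- norm of the scalar factor
  have h32 : ((3:ℂ)/2).re = (3:ℝ)/2 := by
    have e : ((3:ℂ)/2) = (((3:ℝ)/2 : ℝ) : ℂ) := by push_cast; ring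
    rw [e, Complex.ofReal_re]
  have hsc : ∀ i (n : ℕ), 1 ≤ n →
      ‖(n:ℂ) ^ (d (s i) - 3/2)‖ = (n:ℝ) ^ (H i - 3/2) := by
    intro i n hn
    have hn0 : (0:ℝ) < (n:ℝ) := by
      have : (1:ℝ) ≤ (n:ℝ) := by exact_mod_cast hn
      linarith
    have hcast : ((n:ℕ):ℂ) = (((n:ℝ)):ℂ) := by push_cast; ring
    rw [hcast, Complex.norm_cpow_eq_rpow_re_of_pos hn0]
    congr 1
    rw [Complex.sub_re, h32]
  -- main pointwise bound
  have hb1 : ∀ i (n : ℕ), 1 ≤ n → ∀ j : ℤ,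
      ‖(n:ℂ) ^ (d (s i) - 3/2) * a n j (s i)‖ ≤ (3 / (1 - H i)) * (n:ℝ) ^ (-(1/2) : ℝ) := by
    intro i n hn j
    have hn0 : (0:ℝ) < (n:ℝ) := by
      have : (1:ℝ) ≤ (n:ℝ) := by exact_mod_cast hn
      linarith
    have hn1 : (1:ℝ) ≤ (n:ℝ) := by exact_mod_cast hn
    have h1h : (0:ℝ) < 1 - H i := by linarith [hH1 i]
    have hrn : (0:ℝ) ≤ (n:ℝ) ^ (-(1/2):ℝ) := Real.rpow_nonneg hn0.le _
    rw [norm_mul, hsc i n hn]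
    rcases le_or_gt j (n:ℤ) with hj | hj
    · rcases le_or_gt (-(n:ℤ)) j with hjl | hjl
      · -- middle range
        have hA := (hanorm i n j).trans (rs_sum_F_le (hH0 i) (hH1 i) n j hj)
        have hjr : -(n:ℝ) ≤ (j:ℝ) := by exact_mod_cast hjl
        have hjn : (j:ℝ) ≤ (n:ℝ) := by exact_mod_cast hj
        have hle : ((n:ℝ) - (j:ℝ) + 1) ≤ 3 * (n:ℝ) := by linarith
        have hA2 : ‖a n j (s i)‖ ≤ (3 * (n:ℝ)) ^ (1 - H i) / (1 - H i) := by
          refine hA.trans ?_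
          gcongr
        have step : (n:ℝ) ^ (H i - 3/2) * ‖a n j (s i)‖
            ≤ (n:ℝ) ^ (H i - 3/2) * ((3 * (n:ℝ)) ^ (1 - H i) / (1 - H i)) :=
          mul_le_mul_of_nonneg_left hA2 (Real.rpow_nonneg hn0.le _)
        have e1 : (3 * (n:ℝ)) ^ (1 - H i) = (3:ℝ) ^ (1 - H i) * (n:ℝ) ^ (1 - H i) :=
          Real.mul_rpow (by norm_num) hn0.le
        have e2 : (n:ℝ) ^ (H i - 3/2) * (n:ℝ) ^ (1 - H i) = (n:ℝ) ^ (-(1/2):ℝ) := by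
          rw [← Real.rpow_add hn0]; norm_num
        have eq1 : (n:ℝ) ^ (H i - 3/2) * ((3 * (n:ℝ)) ^ (1 - H i) / (1 - H i))
            = (3:ℝ) ^ (1 - H i) / (1 - H i) * (n:ℝ) ^ (-(1/2):ℝ) := by
          rw [e1, ← e2]; ring
        have e3 : (3:ℝ) ^ (1 - H i) ≤ 3 := by
          calc (3:ℝ) ^ (1 - H i) ≤ (3:ℝ) ^ (1:ℝ) :=
                Real.rpow_le_rpow_of_exponent_le (by norm_num) (by linarith [hH0 i])
            _ = 3 := Real.rpow_one 3
        calc (n:ℝ) ^ (H i - 3/2) * ‖a n j (s i)‖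
            ≤ (3:ℝ) ^ (1 - H i) / (1 - H i) * (n:ℝ) ^ (-(1/2):ℝ) := by
              rw [← eq1]; exact step
          _ ≤ 3 / (1 - H i) * (n:ℝ) ^ (-(1/2):ℝ) := by gcongr
      · -- far left
        have hA := (hanorm i n j).trans (rs_sum_F_tail (hH0 i) n j (by omega))
        have hjr : (j:ℝ) < -(n:ℝ) := by exact_mod_cast hjl
        have hnj : (n:ℝ) ≤ 1 - (j:ℝ) := by linarith
        have h2 : ((1:ℝ) - (j:ℝ)) ^ (-(H i)) ≤ (n:ℝ) ^ (-(H i)) :=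
          Real.rpow_le_rpow_of_nonpos hn0 hnj (by linarith [hH0 i])
        have hA2 : ‖a n j (s i)‖ ≤ (n:ℝ) * (n:ℝ) ^ (-(H i)) := by
          refine hA.trans ?_
          exact mul_le_mul_of_nonneg_left h2 hn0.le
        have step : (n:ℝ) ^ (H i - 3/2) * ‖a n j (s i)‖
            ≤ (n:ℝ) ^ (H i - 3/2) * ((n:ℝ) * (n:ℝ) ^ (-(H i))) :=
          mul_le_mul_of_nonneg_left hA2 (Real.rpow_nonneg hn0.le _)
        have e2 : (n:ℝ) ^ (H i - 3/2) * ((n:ℝ) * (n:ℝ) ^ (-(H i))) = (n:ℝ) ^ (-(1/2):ℝ) := by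
          rw [show (n:ℝ) * (n:ℝ) ^ (-(H i)) = (n:ℝ) ^ (1:ℝ) * (n:ℝ) ^ (-(H i)) from by
            rw [Real.rpow_one], ← Real.rpow_add hn0, ← Real.rpow_add hn0]
          congr 1; ring
        have hc : (1:ℝ) ≤ 3 / (1 - H i) := by
          rw [le_div_iff₀ h1h]; linarith [hH0 i]
        calc (n:ℝ) ^ (H i - 3/2) * ‖a n j (s i)‖ ≤ (n:ℝ) ^ (-(1/2):ℝ) := by
              rw [← e2]; exact step
          _ ≤ 3 / (1 - H i) * (n:ℝ) ^ (-(1/2):ℝ) := by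
              nlinarith [hrn]
    · rw [hazero i n j hj, norm_zero, mul_zero]
      positivity
  -- refined far-left bound
  have hb2 : ∀ i (n : ℕ), 1 ≤ n → ∀ j : ℤ, j ≤ 0 →
      ‖(n:ℂ) ^ (d (s i) - 3/2) * a n j (s i)‖
        ≤ (n:ℝ) ^ (H i - 1/2) * ((1:ℝ) - (j:ℝ)) ^ (-(H i)) := by
    intro i n hn j hj
    have hn0 : (0:ℝ) < (n:ℝ) := by
      have : (1:ℝ) ≤ (n:ℝ) := by exact_mod_cast hn
      linarith
    rw [norm_mul, hsc i n hn]
    have hA := (hanorm i n j).trans (rs_sum_F_tail (hH0 i) n j hj)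
    have step : (n:ℝ) ^ (H i - 3/2) * ‖a n j (s i)‖
        ≤ (n:ℝ) ^ (H i - 3/2) * ((n:ℝ) * ((1:ℝ) - (j:ℝ)) ^ (-(H i))) :=
      mul_le_mul_of_nonneg_left hA (Real.rpow_nonneg hn0.le _)
    have e2 : (n:ℝ) ^ (H i - 3/2) * ((n:ℝ) * ((1:ℝ) - (j:ℝ)) ^ (-(H i)))
        = (n:ℝ) ^ (H i - 1/2) * ((1:ℝ) - (j:ℝ)) ^ (-(H i)) := by
      rw [show (n:ℝ) ^ (H i - 3/2) * ((n:ℝ) * ((1:ℝ) - (j:ℝ)) ^ (-(H i)))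
          = ((n:ℝ) ^ (H i - 3/2) * (n:ℝ) ^ (1:ℝ)) * ((1:ℝ) - (j:ℝ)) ^ (-(H i)) from by
        rw [Real.rpow_one]; ring, ← Real.rpow_add hn0]
      congr 2; ring
    rw [← e2]; exact step
  -- the uniform constant
  set B : ℝ := Finset.univ.sup' Finset.univ_nonempty (fun i : Fin p => 3 / (1 - H i)) with hBdef
  have hB : ∀ i, 3 / (1 - H i) ≤ B := by
    intro i
    rw [hBdef]
    exact Finset.le_sup' (fun i : Fin p => 3 / (1 - H i)) (Finset.mem_univ i)
  have hB0 : 0 ≤ B := by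
    obtain ⟨i₀⟩ := hne
    have h1h : (0:ℝ) < 1 - H i₀ := by linarith [hH1 i₀]
    have : (0:ℝ) < 3 / (1 - H i₀) := by positivity
    linarith [hB i₀]
  constructor
  · -- Part 1
    have hsup : ∀ n : ℕ, 1 ≤ n →
        (⨆ j : ℤ, ENNReal.ofReal (Anorm n j)) ≤ ENNReal.ofReal (B * (n:ℝ) ^ (-(1/2):ℝ)) := by
      intro n hn
      refine iSup_le fun j => ?_
      apply ENNReal.ofReal_le_ofReal
      rw [hAnorm]
      refine ciSup_le fun i => ?_
      refine (hb1 i n hn j).trans ?_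
      exact mul_le_mul_of_nonneg_right (hB i) (Real.rpow_nonneg (Nat.cast_nonneg n) _)
    have hup : Tendsto (fun n : ℕ => ENNReal.ofReal (B * (n:ℝ) ^ (-(1/2):ℝ))) atTop (nhds 0) := by
      have h1 : Tendsto (fun n : ℕ => (n:ℝ) ^ (-(1/2):ℝ)) atTop (nhds 0) :=
        (tendsto_rpow_neg_atTop (by norm_num : (0:ℝ) < 1/2)).comp tendsto_natCast_atTop_atTop
      have h2 := h1.const_mul B
      rw [mul_zero] at h2
      have h3 := ENNReal.tendsto_ofReal h2
      rwa [ENNReal.ofReal_zero] at h3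
    refine tendsto_of_tendsto_of_tendsto_of_le_of_le' tendsto_const_nhds hup
      (Eventually.of_forall fun n => zero_le) ?_
    filter_upwards [eventually_ge_atTop 1] with n hn using hsup n hn
  · -- Part 2
    have hcore : ∀ i (n : ℕ), 1 ≤ n →
        (∑' j : ℤ, ENNReal.ofReal (‖(n:ℂ) ^ (d (s i) - 3/2) * a n j (s i)‖ ^ 2))
          ≤ ENNReal.ofReal (27 / (1 - H i)^2 + 1 / (2 * H i - 1)) := by
      intro i n hn
      have hn0 : (0:ℝ) < (n:ℝ) := by
        have : (1:ℝ) ≤ (n:ℝ) := by exact_mod_cast hn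
        linarith
      have hn1 : (1:ℝ) ≤ (n:ℝ) := by exact_mod_cast hn
      have h1h : (0:ℝ) < 1 - H i := by linarith [hH1 i]
      have h2h : (0:ℝ) < 2 * H i - 1 := by linarith [hH12 i]
      set f : ℤ → ENNReal :=
        fun j => ENNReal.ofReal (‖(n:ℂ) ^ (d (s i) - 3/2) * a n j (s i)‖ ^ 2) with hf
      have hzero : ∀ j : ℤ, (n:ℤ) < j → f j = 0 := by
        intro j hj
        rw [hf]
        simp [hazero i n j hj]
      have reindex : ∑' j : ℤ, f j = ∑' t : ℕ, f ((n:ℤ) - t) := by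
        refine tsum_eq_tsum_of_ne_zero_bij
          (fun t => (n:ℤ) - ((t : ↥(Function.support fun t : ℕ => f ((n:ℤ) - t))) : ℕ)) ?_ ?_ ?_
        · intro t1 t2 h12
          have h12' : (n:ℤ) - ((t1 : ℕ) : ℤ) = (n:ℤ) - ((t2 : ℕ) : ℤ) := h12
          have : ((t1 : ℕ) : ℤ) = ((t2 : ℕ) : ℤ) := by linarith
          exact Subtype.ext (by exact_mod_cast this)
        · intro j hj
          have hjn : j ≤ (n:ℤ) := by
            by_contra hc
            exact hj (hzero j (by omega))
          have e : (n:ℤ) - ((((n:ℤ) - j).toNat : ℕ) : ℤ) = j := by omega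
          refine ⟨⟨((n:ℤ) - j).toNat, ?_⟩, ?_⟩
          · show f ((n:ℤ) - ((((n:ℤ) - j).toNat : ℕ) : ℤ)) ≠ 0
            rw [e]
            exact hj
          · show (n:ℤ) - ((((n:ℤ) - j).toNat : ℕ) : ℤ) = j
            exact e
        · intro x
          rfl
      have split : ∑' t : ℕ, f ((n:ℤ) - t)
          = ∑ t ∈ Finset.range (2*n+1), f ((n:ℤ) - t)
            + ∑' t : ℕ, f ((n:ℤ) - ((t + (2*n+1) : ℕ))) :=
        (Summable.sum_add_tsum_nat_add' (f := fun t : ℕ => f ((n:ℤ) - t)) (k := 2*n+1)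
          ENNReal.summable).symm
      have hrange : ∑ t ∈ Finset.range (2*n+1), f ((n:ℤ) - t)
          ≤ ENNReal.ofReal (27 / (1 - H i)^2) := by
        have hterm : ∀ t ∈ Finset.range (2*n+1),
            f ((n:ℤ) - t) ≤ ENNReal.ofReal ((3 / (1 - H i))^2 * ((n:ℝ))⁻¹) := by
          intro t _
          rw [hf]
          apply ENNReal.ofReal_le_ofReal
          have hx := hb1 i n hn ((n:ℤ) - t)
          have hx0 : (0:ℝ) ≤ ‖(n:ℂ) ^ (d (s i) - 3/2) * a n ((n:ℤ) - t) (s i)‖ :=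
            norm_nonneg _
          have sq := pow_le_pow_left₀ hx0 hx 2
          have e : (3 / (1 - H i) * (n:ℝ) ^ (-(1/2):ℝ))^2
              = (3 / (1 - H i))^2 * ((n:ℝ))⁻¹ := by
            rw [mul_pow]
            congr 1
            rw [← Real.rpow_natCast ((n:ℝ) ^ (-(1/2):ℝ)) 2, ← Real.rpow_mul hn0.le]
            norm_num
            exact Real.rpow_neg_one (n:ℝ)
          rw [← e]; exact sq
        calc ∑ t ∈ Finset.range (2*n+1), f ((n:ℤ) - t)
            ≤ (Finset.range (2*n+1)).card
              • ENNReal.ofReal ((3 / (1 - H i))^2 * ((n:ℝ))⁻¹) :=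
              Finset.sum_le_card_nsmul _ _ _ hterm
          _ = ((2*n+1 : ℕ) : ENNReal) * ENNReal.ofReal ((3 / (1 - H i))^2 * ((n:ℝ))⁻¹) := by
              rw [Finset.card_range, nsmul_eq_mul]
          _ = ENNReal.ofReal (((2*n+1 : ℕ) : ℝ)) * ENNReal.ofReal ((3 / (1 - H i))^2 * ((n:ℝ))⁻¹) := by
              rw [ENNReal.ofReal_natCast]
          _ = ENNReal.ofReal (((2*n+1 : ℕ) : ℝ) * ((3 / (1 - H i))^2 * ((n:ℝ))⁻¹)) :=
              (ENNReal.ofReal_mul (by positivity)).symm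
          _ ≤ ENNReal.ofReal (27 / (1 - H i)^2) := by
              apply ENNReal.ofReal_le_ofReal
              have hcard : ((2*n+1 : ℕ) : ℝ) * ((n:ℝ))⁻¹ ≤ 3 := by
                rw [mul_inv_le_iff₀ hn0]
                push_cast
                linarith
              have h9 : ((3:ℝ) / (1 - H i))^2 = 9 / (1 - H i)^2 := by
                rw [div_pow]; norm_num
              have hnn : (0:ℝ) ≤ ((2*n+1 : ℕ) : ℝ) * ((n:ℝ))⁻¹ := by positivity
              calc ((2*n+1 : ℕ) : ℝ) * ((3 / (1 - H i))^2 * ((n:ℝ))⁻¹)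
                  = (((2*n+1 : ℕ) : ℝ) * ((n:ℝ))⁻¹) * (3 / (1 - H i))^2 := by ring
                _ ≤ 3 * (3 / (1 - H i))^2 := by
                    apply mul_le_mul_of_nonneg_right hcard (by positivity)
                _ = 27 / (1 - H i)^2 := by rw [h9]; ring
      have htail : ∑' t : ℕ, f ((n:ℤ) - ((t + (2*n+1) : ℕ)))
          ≤ ENNReal.ofReal (1 / (2 * H i - 1)) := by
        have hptwise : ∀ t : ℕ, f ((n:ℤ) - ((t + (2*n+1) : ℕ)))
            ≤ ENNReal.ofReal
              ((n:ℝ) ^ (2 * H i - 1) * (((n:ℝ) + 1) + 1 + (t:ℝ)) ^ (-(2 * H i))) := by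
          intro t
          rw [hf]
          apply ENNReal.ofReal_le_ofReal
          set j : ℤ := (n:ℤ) - ((t + (2*n+1) : ℕ)) with hjdef
          have hj0 : j ≤ 0 := by rw [hjdef]; push_cast; omega
          have hx := hb2 i n hn j hj0
          have hx0 : (0:ℝ) ≤ ‖(n:ℂ) ^ (d (s i) - 3/2) * a n j (s i)‖ := norm_nonneg _
          have sq := pow_le_pow_left₀ hx0 hx 2
          have hjr : (1:ℝ) - (j:ℝ) = ((n:ℝ) + 1) + 1 + (t:ℝ) := by
            rw [hjdef]; push_cast; ring
          have hjpos : (0:ℝ) < 1 - (j:ℝ) := by rw [hjr]; positivity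
          have e : ((n:ℝ) ^ (H i - 1/2) * ((1:ℝ) - (j:ℝ)) ^ (-(H i)))^2
              = (n:ℝ) ^ (2 * H i - 1) * ((1:ℝ) - (j:ℝ)) ^ (-(2 * H i)) := by
            rw [mul_pow]
            congr 1
            · rw [← Real.rpow_natCast ((n:ℝ) ^ (H i - 1/2)) 2, ← Real.rpow_mul hn0.le]
              norm_num
              ring_nf
            · rw [← Real.rpow_natCast (((1:ℝ) - (j:ℝ)) ^ (-(H i))) 2,
                ← Real.rpow_mul hjpos.le]
              ring_nf
          rw [← hjr]
          rw [← e]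
          exact sq
        refine le_trans (ENNReal.tsum_le_tsum hptwise) ?_
        apply ENNReal.tsum_le_of_sum_range_le
        intro N
        rw [← ENNReal.ofReal_sum_of_nonneg (fun t _ => by positivity)]
        apply ENNReal.ofReal_le_ofReal
        rw [← Finset.mul_sum]
        have hts := rs_tail_sum (q := 2 * H i) (by linarith)
          (c := (n:ℝ) + 1) (by linarith) N
        have hmono : ((n:ℝ) + 1) ^ (1 - 2 * H i) ≤ (n:ℝ) ^ (1 - 2 * H i) :=
          Real.rpow_le_rpow_of_nonpos hn0 (by linarith) (by linarith)
        have hone : (n:ℝ) ^ (2 * H i - 1) * (n:ℝ) ^ (1 - 2 * H i) = 1 := by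
          rw [← Real.rpow_add hn0]; norm_num
        have hnr : (0:ℝ) ≤ (n:ℝ) ^ (2 * H i - 1) := Real.rpow_nonneg hn0.le _
        calc (n:ℝ) ^ (2 * H i - 1)
              * ∑ t ∈ Finset.range N, (((n:ℝ) + 1) + 1 + (t:ℝ)) ^ (-(2 * H i))
            ≤ (n:ℝ) ^ (2 * H i - 1) * (((n:ℝ) + 1) ^ (1 - 2 * H i) / (2 * H i - 1)) :=
              mul_le_mul_of_nonneg_left hts hnr
          _ ≤ (n:ℝ) ^ (2 * H i - 1) * ((n:ℝ) ^ (1 - 2 * H i) / (2 * H i - 1)) := by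
              gcongr
          _ = 1 / (2 * H i - 1) := by
              rw [mul_div_assoc', hone]
      calc ∑' j : ℤ, f j
          = ∑ t ∈ Finset.range (2*n+1), f ((n:ℤ) - t)
            + ∑' t : ℕ, f ((n:ℤ) - ((t + (2*n+1) : ℕ))) := by rw [reindex, split]
        _ ≤ ENNReal.ofReal (27 / (1 - H i)^2) + ENNReal.ofReal (1 / (2 * H i - 1)) :=
            add_le_add hrange htail
        _ = ENNReal.ofReal (27 / (1 - H i)^2 + 1 / (2 * H i - 1)) := by
            rw [ENNReal.ofReal_add (by positivity) (by positivity)]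
    have hpart2 : ∀ n : ℕ, 1 ≤ n →
        ∑' j : ℤ, ENNReal.ofReal ((Anorm n j) ^ 2)
          ≤ ∑ i : Fin p, ENNReal.ofReal (27 / (1 - H i)^2 + 1 / (2 * H i - 1)) := by
      intro n hn
      have hAle : ∀ j : ℤ, ENNReal.ofReal ((Anorm n j) ^ 2)
          ≤ ∑ i : Fin p, ENNReal.ofReal (‖(n:ℂ) ^ (d (s i) - 3/2) * a n j (s i)‖ ^ 2) := by
        intro j
        obtain ⟨i₀, hi₀⟩ := exists_eq_ciSup_of_finite
          (f := fun i : Fin p => ‖(n:ℂ) ^ (d (s i) - 3/2) * a n j (s i)‖)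
        rw [hAnorm, ← hi₀]
        exact Finset.single_le_sum (f := fun i : Fin p =>
            ENNReal.ofReal (‖(n:ℂ) ^ (d (s i) - 3/2) * a n j (s i)‖ ^ 2))
          (fun i _ => zero_le) (Finset.mem_univ i₀)
      calc ∑' j : ℤ, ENNReal.ofReal ((Anorm n j) ^ 2)
          ≤ ∑' j : ℤ, ∑ i : Fin p,
              ENNReal.ofReal (‖(n:ℂ) ^ (d (s i) - 3/2) * a n j (s i)‖ ^ 2) :=
            ENNReal.tsum_le_tsum hAle
        _ = ∑ i : Fin p, ∑' j : ℤ,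
              ENNReal.ofReal (‖(n:ℂ) ^ (d (s i) - 3/2) * a n j (s i)‖ ^ 2) :=
            Summable.tsum_finsetSum (fun i _ => ENNReal.summable)
        _ ≤ ∑ i : Fin p, ENNReal.ofReal (27 / (1 - H i)^2 + 1 / (2 * H i - 1)) :=
            Finset.sum_le_sum (fun i _ => hcore i n hn)
    have hls : Filter.limsup (fun n : ℕ => ∑' j : ℤ, ENNReal.ofReal ((Anorm n j) ^ 2)) atTop
        ≤ ∑ i : Fin p, ENNReal.ofReal (27 / (1 - H i)^2 + 1 / (2 * H i - 1)) := by
      apply Filter.limsup_le_of_le (by isBoundedDefault)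
      filter_upwards [eventually_ge_atTop 1] with n hn using hpart2 n hn
    exact lt_of_le_of_lt hls (ENNReal.sum_lt_top.mpr (fun i _ => ENNReal.ofReal_lt_top))
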